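/- (Comparison principle for the truncated problem.) Let N ≥ 1, m ≥ 0, ε > 0, R > 0, let a ∈ C(ℝ^N) ∩ L^∞(ℝ^N), and let J ∈ L¹(ℝ^N) be a nonnegative function. Let v be continuous and positive on B̄_R with M_{R,ε,m}[v](x) + v(x)(a(x) − v(x)) ≤ 0 for all x ∈ B_R (super-solution), and let u be continuous and nonnegative on B̄_R with M_{R,ε,m}[u](x) + u(x)(a(x) − u(x)) ≥ 0 for all x ∈ B_R (sub-solution). Then u ≤ v on B̄_R. -/
import Mathlib


open MeasureTheory Filter Metric Set

noncomputable section

abbrev Sp (N : ℕ) := EuclideanSpace ℝ (Fin N)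

/-- The rescaled kernel `J_ε(z) = ε^{-N} J(z/ε)`. -/
def Jresc (N : ℕ) (J : Sp N → ℝ) (ε : ℝ) (z : Sp N) : ℝ := (1 / ε ^ N) * J (ε⁻¹ • z)

/-- The convolution `(J_ε ∗ u)(x)`. -/
def convJ (N : ℕ) (J : Sp N → ℝ) (ε : ℝ) (u : Sp N → ℝ) (x : Sp N) : ℝ :=
  ∫ y, Jresc N J ε (x - y) * u y

/-- `u` satisfies the nonlocal KPP equation at the point `x`:
`ε^{-m} (J_ε ∗ u - u)(x) + u(x)(a(x) - u(x)) = 0`. -/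
def kppEq (N : ℕ) (J a : Sp N → ℝ) (m ε : ℝ) (u : Sp N → ℝ) (x : Sp N) : Prop :=
  (1 / ε ^ m) * (convJ N J ε u x - u x) + u x * (a x - u x) = 0

/-- Assumption (1.1): `a` continuous, bounded, `a⁺ ≢ 0`, `limsup_{|x|→∞} a(x) < 0`. -/
def assumpA (N : ℕ) (a : Sp N → ℝ) : Prop :=
  Continuous a ∧ (∃ C, ∀ x, |a x| ≤ C) ∧ (∃ x, 0 < a x) ∧
    (∃ R δ : ℝ, 0 < δ ∧ ∀ x : Sp N, R ≤ ‖x‖ → a x ≤ -δ)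

/-- Assumption (1.4): `J ∈ L¹` nonnegative, radially symmetric, with unit mass and
finite `m`-th order moment. -/
def assumpJ (N : ℕ) (J : Sp N → ℝ) (m : ℝ) : Prop :=
  Integrable J ∧ (∀ x, 0 ≤ J x) ∧ (∀ x y : Sp N, ‖x‖ = ‖y‖ → J x = J y) ∧
    (∫ x, J x) = 1 ∧ Integrable (fun x => J x * ‖x‖ ^ m)

/-- The truncated operator `M_{R,ε,m}[φ](x) = ε^{-m}(∫_{B_R} J_ε(x-y) φ(y) dy - φ(x))`. -/
def truncOp (N : ℕ) (J : Sp N → ℝ) (R ε m : ℝ) (φ : Sp N → ℝ) (x : Sp N) : ℝ :=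
  (1 / ε ^ m) * ((∫ y in ball (0 : Sp N) R, Jresc N J ε (x - y) * φ y) - φ x)

/-- **Lemma 4.2 (Comparison principle for the truncated problem).** If `v` is a positive
continuous super-solution and `u` a nonnegative continuous sub-solution of the truncated
problem on `B̄_R`, then `u ≤ v` on `B̄_R`. -/
theorem statement9 (N : ℕ) (hN : 1 ≤ N) (m : ℝ) (hm : 0 ≤ m) (ε : ℝ) (hε : 0 < ε)
    (R : ℝ) (hR : 0 < R) (a : Sp N → ℝ) (hacont : Continuous a)
    (habdd : ∃ C, ∀ x, |a x| ≤ C)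
    (J : Sp N → ℝ) (hJint : Integrable J) (hJpos : ∀ x, 0 ≤ J x)
    (v : Sp N → ℝ) (hvcont : ContinuousOn v (closedBall (0 : Sp N) R))
    (hvpos : ∀ x ∈ closedBall (0 : Sp N) R, 0 < v x)
    (hvsuper : ∀ x ∈ ball (0 : Sp N) R,
      truncOp N J R ε m v x + v x * (a x - v x) ≤ 0)
    (u : Sp N → ℝ) (hucont : ContinuousOn u (closedBall (0 : Sp N) R))
    (hupos : ∀ x ∈ closedBall (0 : Sp N) R, 0 ≤ u x)
    (husub : ∀ x ∈ ball (0 : Sp N) R,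
      0 ≤ truncOp N J R ε m u x + u x * (a x - u x)) :
    ∀ x ∈ closedBall (0 : Sp N) R, u x ≤ v x := by

  classical
  by_contra hcon
  push_neg at hcon
  obtain ⟨x₁, hx₁K, hx₁⟩ := hcon
  set K := closedBall (0 : Sp N) R with hKdef
  set B := ball (0 : Sp N) R with hBdef
  have hBK : B ⊆ K := ball_subset_closedBall
  have hKc : IsCompact K := isCompact_closedBall _ _
  have hKne : (0 : Sp N) ∈ K := mem_closedBall_self hR.le
  have hgcont : ContinuousOn (fun x => u x / v x) K :=
    hucont.div hvcont (fun x hx => (hvpos x hx).ne')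
  obtain ⟨x₀, hx₀K, hx₀max⟩ := hKc.exists_isMaxOn ⟨0, hKne⟩ hgcont
  set θ := u x₀ / v x₀ with hθdef
  have hθ1 : 1 < θ :=
    lt_of_lt_of_le ((one_lt_div (hvpos x₁ hx₁K)).2 hx₁) (hx₀max hx₁K)
  have hθ0 : 0 < θ := lt_trans one_pos hθ1
  have hle : ∀ y ∈ K, u y ≤ θ * v y := fun y hy =>
    (div_le_iff₀ (hvpos y hy)).1 (hx₀max hy)
  have heq : u x₀ = θ * v x₀ := (div_mul_cancel₀ _ (hvpos x₀ hx₀K).ne').symm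
  -- integrability of the rescaled kernel
  have hJε : Integrable (Jresc N J ε) := by
    have h1 : Integrable (fun z : Sp N => J (ε⁻¹ • z)) :=
      (integrable_comp_smul_iff volume J (inv_ne_zero hε.ne')).2 hJint
    exact h1.const_mul _
  have hJx : ∀ x : Sp N, Integrable (fun y => Jresc N J ε (x - y)) := by
    intro x
    exact (integrable_comp_sub_left (Jresc N J ε) x).2 hJε
  have hJnn : ∀ z, 0 ≤ Jresc N J ε z := by
    intro z
    exact mul_nonneg (by positivity) (hJpos _)
  -- integrability of kernel times a continuous function on the ball
  have hint : ∀ (f : Sp N → ℝ), ContinuousOn f K → ∀ x : Sp N,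
      IntegrableOn (fun y => Jresc N J ε (x - y) * f y) B := by
    intro f hf x
    obtain ⟨C, hC⟩ := hKc.exists_bound_of_continuousOn hf
    have h1 : IntegrableOn (fun y => Jresc N J ε (x - y)) B := (hJx x).integrableOn
    have hmeas : AEStronglyMeasurable f (volume.restrict B) :=
      (hf.mono hBK).aestronglyMeasurable measurableSet_ball
    have hbd : ∀ᵐ y ∂(volume.restrict B), ‖f y‖ ≤ C :=
      (ae_restrict_iff' measurableSet_ball).2 (ae_of_all _ fun y hy => hC y (hBK hy))
    have := h1.bdd_mul hmeas hbd
    exact this.congr (by filter_upwards with y using mul_comm _ _)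
  -- comparison of integrals
  have hIcomp : ∀ x : Sp N, (∫ y in B, Jresc N J ε (x - y) * u y)
      ≤ θ * ∫ y in B, Jresc N J ε (x - y) * v y := by
    intro x
    rw [← integral_const_mul]
    refine setIntegral_mono_on (hint u hucont x) ((hint v hvcont x).const_mul θ)
      measurableSet_ball ?_
    intro y hy
    have h1 := hle y (hBK hy)
    have h2 := hJnn (x - y)
    nlinarith [mul_le_mul_of_nonneg_left h1 h2]
  -- the key nonnegativity on the open ball
  have key : ∀ x ∈ B, 0 ≤ (1 / ε ^ m) * (θ * v x - u x)
      + (u x * (a x - u x) - θ * (v x * (a x - v x))) := by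
    intro x hx
    have h1 := husub x hx
    have h2 := hvsuper x hx
    have h3 := hIcomp x
    unfold truncOp at h1 h2
    have hεm : (0:ℝ) < 1 / ε ^ m := by positivity
    nlinarith [mul_le_mul_of_nonneg_left h2 hθ0.le,
      mul_le_mul_of_nonneg_left h3 hεm.le]
  -- pass to the limit at x₀
  set F : Sp N → ℝ := fun x => (1 / ε ^ m) * (θ * v x - u x)
      + (u x * (a x - u x) - θ * (v x * (a x - v x))) with hFdef
  have hFcont : ContinuousOn F K := by
    apply ContinuousOn.add
    · exact continuousOn_const.mul ((continuousOn_const.mul hvcont).sub hucont)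
    · exact (hucont.mul ((hacont.continuousOn).sub hucont)).sub
        (continuousOn_const.mul (hvcont.mul ((hacont.continuousOn).sub hvcont)))
  have hx₀cl : x₀ ∈ closure B := by
    rw [hBdef, closure_ball (0 : Sp N) hR.ne']
    exact hx₀K
  have hFx₀ : 0 ≤ F x₀ := by
    have hct : ContinuousWithinAt F B x₀ := (hFcont x₀ hx₀K).mono hBK
    haveI : (nhdsWithin x₀ B).NeBot := mem_closure_iff_nhdsWithin_neBot.1 hx₀cl
    exact ge_of_tendsto hct (eventually_nhdsWithin_of_forall key)
  have hv0 := hvpos x₀ hx₀K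
  have : F x₀ = θ * (v x₀ * v x₀) * (1 - θ) := by
    rw [hFdef]; simp only []; rw [heq]; ring
  rw [this] at hFx₀
  nlinarith [mul_pos (mul_pos hθ0 (mul_pos hv0 hv0)) (sub_pos.2 hθ1)]
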